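/- Let g be proper, lsc, and ρ-weakly convex. Then for each x ∈ ℝ^d, the function γ ↦ g^γ(x) is differentiable on (0, 1/ρ) with derivative ∂g^γ/∂γ (x) = -(1/(2γ²))‖x - Prox_{γg}(x)‖². -/

import Mathlib

open scoped RealInnerProductSpace
open Set

lemma midnorm {E : Type*} [NormedAddCommGroup E] [InnerProductSpace ℝ E] (u v : E) :
    ‖(1/2:ℝ)•u + (1/2:ℝ)•v‖^2 = 1/2*‖u‖^2 + 1/2*‖v‖^2 - 1/4*‖u-v‖^2 := by
  have h := parallelogram_law_with_norm ℝ u v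
  have h2 : (1/2:ℝ)•u + (1/2:ℝ)•v = (1/2:ℝ)•(u+v) := by module
  rw [h2, norm_smul]
  simp only [Real.norm_eq_abs]
  rw [show |(1/2:ℝ)| = 1/2 by norm_num]
  nlinarith [norm_nonneg (u+v), norm_nonneg (u-v)]

lemma growth_aux {E : Type*} [NormedAddCommGroup E] [InnerProductSpace ℝ E]
    (g : E → ℝ) (ρ t : ℝ) (ht : 0 < t)
    (hconv : ConvexOn ℝ Set.univ (fun z => g z + ρ / 2 * ‖z‖ ^ 2))
    (x p : E) (hmin : ∀ y, 1/(2*t)*‖x-p‖^2 + g p ≤ 1/(2*t)*‖x-y‖^2 + g y)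
    (y : E) :
    1/(2*t)*‖x-p‖^2 + g p + (1-t*ρ)/(4*t)*‖y-p‖^2 ≤ 1/(2*t)*‖x-y‖^2 + g y := by
  have hm := hmin ((1/2:ℝ)•y + (1/2:ℝ)•p)
  have hc := hconv.2 (mem_univ y) (mem_univ p)
    (by norm_num : (0:ℝ) ≤ 1/2) (by norm_num : (0:ℝ) ≤ 1/2) (by norm_num)
  simp only [smul_eq_mul] at hc
  have e1 : ‖x - ((1/2:ℝ)•y + (1/2:ℝ)•p)‖^2
      = 1/2*‖x-y‖^2 + 1/2*‖x-p‖^2 - 1/4*‖y-p‖^2 := by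
    have h2 : x - ((1/2:ℝ)•y + (1/2:ℝ)•p) = (1/2:ℝ)•(x-y) + (1/2:ℝ)•(x-p) := by module
    rw [h2, midnorm]
    rw [show (x-y)-(x-p) = -(y-p) by abel, norm_neg]
  have e2 : ‖(1/2:ℝ)•y + (1/2:ℝ)•p‖^2 = 1/2*‖y‖^2 + 1/2*‖p‖^2 - 1/4*‖y-p‖^2 := midnorm y p
  rw [e1] at hm
  rw [e2] at hc
  have hid : (1-t*ρ)/(4*t) = (1/(2*t))*(1/4)*2 - ρ/4 := by field_simp
  rw [hid]
  linarith [hm, hc]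

lemma key_aux (a b P Q s gp gq α : ℝ)
    (hPnn : 0 ≤ P) (hQnn : 0 ≤ Q) (hsnn : 0 ≤ s) (hα : 0 < α)
    (hQ2 : |Q - P| ≤ s)
    (g1 : a*P^2 + gp + α*s^2 ≤ a*Q^2 + gq)
    (g2 : b*Q^2 + gq ≤ b*P^2 + gp)
    (hd : |a - b| ≤ α/2) :
    α * |(b*Q^2 + gq) - (a*P^2 + gp + (b - a)*P^2)| ≤ 16*P^2*(a-b)^2 := by
  have hDnn : (0:ℝ) ≤ |a - b| := abs_nonneg _
  have hA : α*s^2 ≤ (a-b)*(Q^2-P^2) := by nlinarith [g1, g2]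
  have habs : |Q^2 - P^2| ≤ (2*P+s)*s := by
    have h4 : Q^2 - P^2 = (Q+P)*(Q-P) := by ring
    have hQ1 : Q ≤ P + s := by
      have := abs_le.mp hQ2
      linarith [this.2]
    rw [h4, abs_mul, abs_of_nonneg (by linarith : (0:ℝ) ≤ Q+P)]
    have h5 : Q + P ≤ 2*P + s := by linarith
    exact mul_le_mul h5 hQ2 (abs_nonneg _) (by linarith)
  have h1 : (a-b)*(Q^2-P^2) ≤ |a-b| * ((2*P+s)*s) := by
    calc (a-b)*(Q^2-P^2) ≤ |(a-b)*(Q^2-P^2)| := le_abs_self _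
      _ = |a-b| * |Q^2-P^2| := abs_mul _ _
      _ ≤ |a-b| * ((2*P+s)*s) := mul_le_mul_of_nonneg_left habs hDnn
  have hs4 : α*s ≤ 4*|a-b| * P := by
    rcases eq_or_lt_of_le hsnn with hs0 | hs0
    · rw [← hs0, mul_zero]; positivity
    · nlinarith [hA, h1, hd, hs0]
  have hphi : (b*P^2 + gp) - (b*Q^2 + gq) ≤ (a-b)*(Q^2-P^2) := by
    nlinarith [g1, mul_nonneg hα.le (sq_nonneg s)]
  have hupper : (b*Q^2 + gq) - (a*P^2 + gp + (b-a)*P^2) ≤ 0 := by nlinarith [g2]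
  rw [abs_sub_comm, abs_of_nonneg (by linarith : (0:ℝ) ≤ (a*P^2+gp+(b-a)*P^2) - (b*Q^2+gq))]
  have hss : (α*s)*(α*s) ≤ (4*|a-b| * P)*(4*|a-b| * P) :=
    mul_le_mul hs4 hs4 (by positivity) (by positivity)
  have h7 := mul_le_mul_of_nonneg_left (le_trans hphi h1) (mul_nonneg hα.le hα.le)
  have h8 := mul_le_mul_of_nonneg_left hs4 (by positivity : (0:ℝ) ≤ 2*P*|a-b| * α)
  have h9 := mul_le_mul_of_nonneg_left hss hDnn
  have h10 := mul_le_mul_of_nonneg_left hd (by positivity : (0:ℝ) ≤ 16*|a-b|^2*P^2)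
  have hsq : α*(16*P^2*(a-b)^2) = 16*α*P^2*|a-b|^2 := by rw [sq_abs]; ring
  have hchain : α*(α*((b*P^2+gp) - (b*Q^2+gq))) ≤ α*(16*P^2*(a-b)^2) := by
    nlinarith [h7, h8, h9, h10, hsq]
  have hfin : α*((b*P^2+gp) - (b*Q^2+gq)) ≤ 16*P^2*(a-b)^2 :=
    le_of_mul_le_mul_left hchain hα
  linarith [hfin]

set_option maxHeartbeats 1000000 in
theorem moreau_envelope_deriv_in_gamma {d : ℕ}
    (g : EuclideanSpace ℝ (Fin d) → ℝ) (ρ : ℝ)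
    (hlsc : LowerSemicontinuous g)
    (hconv : ConvexOn ℝ Set.univ (fun z => g z + ρ / 2 * ‖z‖ ^ 2))
    (x : EuclideanSpace ℝ (Fin d))
    (prox : ℝ → EuclideanSpace ℝ (Fin d))
    (hprox : ∀ γ : ℝ, 0 < γ → γ * ρ < 1 →
      IsMinOn (fun y => (1 / (2 * γ)) * ‖x - y‖ ^ 2 + g y) Set.univ (prox γ)) :
    ∀ γ : ℝ, 0 < γ → γ * ρ < 1 →
      HasDerivAt (fun t => ⨅ y, (1 / (2 * t)) * ‖x - y‖ ^ 2 + g y)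
        (-(1 / (2 * γ ^ 2)) * ‖x - prox γ‖ ^ 2) γ := by
  intro γ hγ hγρ
  have hmins : ∀ t, 0 < t → t*ρ < 1 → ∀ y,
      1/(2*t)*‖x - prox t‖^2 + g (prox t) ≤ 1/(2*t)*‖x-y‖^2 + g y := by
    intro t ht htρ y
    exact isMinOn_iff.mp (hprox t ht htρ) y (mem_univ y)
  have hEeq : ∀ t, 0 < t → t*ρ < 1 →
      (⨅ y, 1/(2*t)*‖x-y‖^2 + g y) = 1/(2*t)*‖x - prox t‖^2 + g (prox t) := by
    intro t ht htρ
    refine le_antisymm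
      (ciInf_le ⟨1/(2*t)*‖x - prox t‖^2 + g (prox t), ?_⟩ (prox t))
      (le_ciInf fun y => hmins t ht htρ y)
    rintro v ⟨y, rfl⟩
    exact hmins t ht htρ y
  have h1γρ : (0:ℝ) < 1 - γ*ρ := by linarith
  have hα : (0:ℝ) < (1-γ*ρ)/(4*γ) := by positivity
  have hPnn : (0:ℝ) ≤ ‖x - prox γ‖ := norm_nonneg _
  have hgrow := growth_aux g ρ γ hγ hconv x (prox γ) (hmins γ hγ hγρ)
  -- key bound
  have key : ∀ t, 0 < t → t*ρ < 1 →
      |1/(2*γ) - 1/(2*t)| ≤ (1-γ*ρ)/(4*γ)/2 →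
      (1-γ*ρ)/(4*γ) *
        |(⨅ y, 1/(2*t)*‖x-y‖^2 + g y)
          - (1/(2*γ)*‖x - prox γ‖^2 + g (prox γ)
             + (1/(2*t) - 1/(2*γ))*‖x - prox γ‖^2)|
        ≤ 16*‖x - prox γ‖^2*(1/(2*γ) - 1/(2*t))^2 := by
    intro t ht htρ hd
    rw [hEeq t ht htρ]
    have hQ2 : |‖x - prox t‖ - ‖x - prox γ‖| ≤ ‖prox γ - prox t‖ := by
      have h := abs_norm_sub_norm_le (x - prox t) (x - prox γ)
      rwa [show (x - prox t) - (x - prox γ) = prox γ - prox t by abel] at h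
    have g1 := hgrow (prox t)
    rw [show ‖prox t - prox γ‖ = ‖prox γ - prox t‖ from norm_sub_rev _ _] at g1
    have g2 := hmins t ht htρ (prox γ)
    exact key_aux (1/(2*γ)) (1/(2*t)) (‖x - prox γ‖) (‖x - prox t‖) (‖prox γ - prox t‖)
      (g (prox γ)) (g (prox t)) ((1-γ*ρ)/(4*γ))
      hPnn (norm_nonneg _) (norm_nonneg _) hα hQ2 g1 g2 hd
  -- the model function φ has the right derivative
  have hφ : HasDerivAt (fun t : ℝ => 1/(2*γ)*‖x - prox γ‖^2 + g (prox γ)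
        + (1/(2*t) - 1/(2*γ))*‖x - prox γ‖^2)
      (-(1/(2*γ^2)) * ‖x - prox γ‖^2) γ := by
    have h1 : HasDerivAt (fun t : ℝ => 2*t) 2 γ := by
      simpa using (hasDerivAt_id γ).const_mul 2
    have h2 : HasDerivAt (fun t : ℝ => 1/(2*t)) (-(2)/(2*γ)^2) γ := by
      have h := h1.inv (by positivity : 2*γ ≠ 0)
      simp only [one_div]
      exact h
    have h3 := (h2.sub_const (1/(2*γ))).mul_const (‖x - prox γ‖^2)
    have h4 := h3.const_add (1/(2*γ)*‖x - prox γ‖^2 + g (prox γ))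
    exact h4.congr_deriv (by ring)
  have hEγ : (⨅ y, 1/(2*γ)*‖x-y‖^2 + g y)
      = 1/(2*γ)*‖x - prox γ‖^2 + g (prox γ) := hEeq γ hγ hγρ
  -- the difference has derivative 0
  have hdiff : HasDerivAt (fun t : ℝ => (⨅ y, 1/(2*t)*‖x-y‖^2 + g y)
      - (1/(2*γ)*‖x - prox γ‖^2 + g (prox γ)
         + (1/(2*t) - 1/(2*γ))*‖x - prox γ‖^2)) 0 γ := by
    rw [hasDerivAt_iff_isLittleO]
    simp only [hEγ, sub_self, zero_mul, add_zero, smul_zero, sub_zero]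
    refine Asymptotics.IsBigO.trans_isLittleO (g := fun t : ℝ => (t-γ)^2) ?_ ?_
    case refine_2 =>
      rw [Asymptotics.isLittleO_iff]
      intro c hc
      filter_upwards [Metric.ball_mem_nhds γ hc] with t htb
      rw [Metric.mem_ball, Real.dist_eq] at htb
      rw [Real.norm_eq_abs, Real.norm_eq_abs, show |(t-γ)^2| = |t-γ| * |t-γ| by
        rw [sq, abs_mul]]
      nlinarith [abs_nonneg (t-γ)]
    case refine_1 =>
      rw [Asymptotics.isBigO_iff]
      refine ⟨16*‖x - prox γ‖^2/((1-γ*ρ)/(4*γ))/γ^4 + 1, ?_⟩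
      have hrpos : (0:ℝ) < min (γ/2)
          (min ((1-γ*ρ)/(2*(|ρ|+1))) ((1-γ*ρ)/(4*γ)*γ^2/2)) := by
        refine lt_min (by positivity) (lt_min (by positivity) (by positivity))
      filter_upwards [Metric.ball_mem_nhds γ hrpos] with t htb
      rw [Metric.mem_ball, Real.dist_eq] at htb
      have hr1 : |t-γ| < γ/2 := lt_of_lt_of_le htb (min_le_left _ _)
      have hr2 : |t-γ| < (1-γ*ρ)/(2*(|ρ|+1)) :=
        lt_of_lt_of_le htb ((min_le_right _ _).trans (min_le_left _ _))
      have hr3 : |t-γ| < (1-γ*ρ)/(4*γ)*γ^2/2 :=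
        lt_of_lt_of_le htb ((min_le_right _ _).trans (min_le_right _ _))
      have habs1 := abs_lt.mp hr1
      have ht : 0 < t := by linarith [habs1.1]
      have hhalf : γ/2 ≤ t := by linarith [habs1.1]
      have htρ : t*ρ < 1 := by
        have h5 : (t-γ)*ρ ≤ |t-γ| * (|ρ|+1) := by
          have h6 := le_abs_self ((t-γ)*ρ)
          rw [abs_mul] at h6
          nlinarith [abs_nonneg (t-γ), le_abs_self ρ, abs_nonneg ρ]
        have h7 : |t-γ| * (|ρ|+1) < (1-γ*ρ)/2 := by
          have h8 : (0:ℝ) < |ρ|+1 := by positivity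
          have h9 : (1-γ*ρ)/(2*(|ρ|+1))*(|ρ|+1) = (1-γ*ρ)/2 := by field_simp
          nlinarith [hr2, abs_nonneg (t-γ)]
        nlinarith [h5, h7]
      have hdb : |1/(2*γ) - 1/(2*t)| ≤ |t-γ|/γ^2 := by
        have hval : 1/(2*γ) - 1/(2*t) = (t-γ)/(2*t*γ) := by
          field_simp
        rw [hval, abs_div, abs_of_pos (by positivity : (0:ℝ) < 2*t*γ)]
        gcongr
        all_goals nlinarith [hγ, mul_pos hγ hγ, abs_nonneg (t-γ)]
      have hd : |1/(2*γ) - 1/(2*t)| ≤ (1-γ*ρ)/(4*γ)/2 := by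
        refine le_trans hdb ?_
        rw [div_le_iff₀ (by positivity : (0:ℝ) < γ^2)]
        nlinarith [hr3]
      have kb := key t ht htρ hd
      have hδsq : (1/(2*γ) - 1/(2*t))^2 ≤ (t-γ)^2/γ^4 := by
        have h11 : |1/(2*γ) - 1/(2*t)| * |1/(2*γ) - 1/(2*t)| ≤ (|t-γ|/γ^2)*(|t-γ|/γ^2) :=
          mul_le_mul hdb hdb (abs_nonneg _) (by positivity)
        calc (1/(2*γ) - 1/(2*t))^2 = |1/(2*γ) - 1/(2*t)| * |1/(2*γ) - 1/(2*t)| := by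
              rw [← abs_mul, ← sq, abs_of_nonneg (sq_nonneg _)]
          _ ≤ (|t-γ|/γ^2)*(|t-γ|/γ^2) := h11
          _ = (t-γ)^2/γ^4 := by
              rw [div_mul_div_comm, ← sq, ← sq, sq_abs]
              ring
      rw [Real.norm_eq_abs, Real.norm_eq_abs, abs_of_nonneg (sq_nonneg (t-γ))]
      have hstep : (1-γ*ρ)/(4*γ) *
          |(⨅ y, 1/(2*t)*‖x-y‖^2 + g y)
            - (1/(2*γ)*‖x - prox γ‖^2 + g (prox γ)
               + (1/(2*t) - 1/(2*γ))*‖x - prox γ‖^2)|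
          ≤ (1-γ*ρ)/(4*γ) * ((16*‖x - prox γ‖^2/((1-γ*ρ)/(4*γ))/γ^4 + 1)*(t-γ)^2) := by
        refine le_trans kb ?_
        have hAC : (1-γ*ρ)/(4*γ) * ((16*‖x - prox γ‖^2/((1-γ*ρ)/(4*γ))/γ^4 + 1)*(t-γ)^2)
            = (16*‖x - prox γ‖^2/γ^4)*(t-γ)^2 + (1-γ*ρ)/(4*γ)*(t-γ)^2 := by
          field_simp
        have hm1 := mul_le_mul_of_nonneg_left hδsq
          (by positivity : (0:ℝ) ≤ 16*‖x - prox γ‖^2)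
        rw [hAC]
        have hrest : (0:ℝ) ≤ (1-γ*ρ)/(4*γ)*(t-γ)^2 := mul_nonneg hα.le (sq_nonneg (t-γ))
        have hre : 16*‖x - prox γ‖^2*((t-γ)^2/γ^4) = (16*‖x - prox γ‖^2/γ^4)*(t-γ)^2 := by
          ring
        linarith [hm1, hrest, hre]
      have := le_of_mul_le_mul_left hstep hα
      linarith [this]
  have hsum := hdiff.add hφ
  have heq : (fun t : ℝ => ((⨅ y, 1/(2*t)*‖x-y‖^2 + g y)
      - (1/(2*γ)*‖x - prox γ‖^2 + g (prox γ)
         + (1/(2*t) - 1/(2*γ))*‖x - prox γ‖^2))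
      + (1/(2*γ)*‖x - prox γ‖^2 + g (prox γ)
         + (1/(2*t) - 1/(2*γ))*‖x - prox γ‖^2))
      = fun t : ℝ => ⨅ y, 1/(2*t)*‖x-y‖^2 + g y := by
    funext t; ring
  simp only [Pi.add_def] at hsum
  rw [heq] at hsum
  simpa using hsum
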